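/- Under assumption (A1) on the weights and with Ω bounded containing at least one grid point, the first Dirichlet eigenvalue λ_{h,Ω} of −L_h on Ω, characterized as λ_{h,Ω} = min{⟨φ, −L_h φ⟩_{ℓ²(hℤ^N)} : φ ∈ X_h(Ω), ‖φ‖_{ℓ²(hℤ^N)} = 1}, is strictly positive. -/

import Mathlib

open Real

/-- The discrete diffusion operator on the grid `hℤᴺ` (identified with `ℤᴺ`),
`L_h φ(x_α) = Σ_{β≠0} (φ(x_α + x_β) - φ(x_α)) ω(β)`. -/
noncomputable def discreteLh {N : ℕ} (ω : (Fin N → ℤ) → ℝ) (φ : (Fin N → ℤ) → ℝ)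
    (α : Fin N → ℤ) : ℝ :=
  ∑' β : Fin N → ℤ, (φ (α + β) - φ α) * ω β

/-- Under (A1) and with a bounded domain `Ω` containing at least one grid point, the first
Dirichlet eigenvalue of `-L_h` on `Ω`, given by minimizing the Rayleigh quotient over
normalized functions vanishing outside `Ω`, is strictly positive. -/
theorem stmt4 (N : ℕ) (h : ℝ) (hh : 0 < h) (ω : (Fin N → ℤ) → ℝ)
    (hsym : ∀ α, ω (-α) = ω α) (hnonneg : ∀ α, 0 ≤ ω α) (hω0 : ω 0 = 0)
    (hsum : Summable ω) (hpos : 0 < ∑' α, ω α)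
    (Ω : Set (Fin N → ℝ)) (hΩb : Bornology.IsBounded Ω)
    (S : Finset (Fin N → ℤ)) (hSdef : ∀ α, α ∈ S ↔ (fun k => h * α k) ∈ Ω)
    (hS : S.Nonempty)
    (lam : ℝ)
    (hlam : IsLeast {r : ℝ | ∃ φ : (Fin N → ℤ) → ℝ,
        (∀ α, α ∉ S → φ α = 0) ∧ h ^ N * ∑ α ∈ S, (φ α) ^ 2 = 1 ∧
        r = h ^ N * ∑ α ∈ S, φ α * (-(discreteLh ω φ α))} lam) :
    0 < lam := by
  obtain ⟨⟨φ, hφ0, hφnorm, hφlam⟩, -⟩ := hlam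
  -- a uniform bound on φ
  set M : ℝ := ∑ α ∈ S, |φ α| with hM
  have hMb : ∀ γ, |φ γ| ≤ M := by
    intro γ
    by_cases hγ : γ ∈ S
    · exact Finset.single_le_sum (f := fun a => |φ a|) (fun a _ => abs_nonneg _) hγ
    · rw [hφ0 γ hγ, abs_zero]
      exact Finset.sum_nonneg fun a _ => abs_nonneg _
  -- summability of the summand for each α
  have hsummand : ∀ α : Fin N → ℤ, Summable (fun β => φ α * ((φ α - φ (α + β)) * ω β)) := by
    intro α
    apply Summable.of_abs
    apply Summable.of_nonneg_of_le (fun β => abs_nonneg _) (fun β => ?_)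
      (hsum.mul_left (M * (2 * M)))
    rw [abs_mul, abs_mul, abs_of_nonneg (hnonneg β), mul_assoc]
    have h2 : |φ α - φ (α + β)| ≤ 2 * M := by
      have a1 := abs_le.mp (hMb α)
      have a2 := abs_le.mp (hMb (α + β))
      rw [abs_le]
      constructor <;> linarith [a1.1, a1.2, a2.1, a2.2]
    have hw := hnonneg β
    have hMnn : 0 ≤ M := le_trans (abs_nonneg _) (hMb 0)
    gcongr
    exact hMb α
  -- rewrite the summand using tsum
  have hLh : ∀ α, φ α * (-(discreteLh ω φ α)) = ∑' β, φ α * ((φ α - φ (α + β)) * ω β) := by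
    intro α
    calc φ α * (-(discreteLh ω φ α))
        = φ α * ∑' β, -((φ (α + β) - φ α) * ω β) := by rw [discreteLh, tsum_neg]
      _ = ∑' β, φ α * -((φ (α + β) - φ α) * ω β) := by rw [tsum_mul_left]
      _ = ∑' β, φ α * ((φ α - φ (α + β)) * ω β) := by
          congr 1; funext β; ring
  have hswap : ∑ α ∈ S, φ α * (-(discreteLh ω φ α))
      = ∑' β, ∑ α ∈ S, φ α * ((φ α - φ (α + β)) * ω β) := by
    simp_rw [hLh]
    exact (Summable.tsum_finsetSum (fun α _ => hsummand α)).symm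
  -- the symmetrization identity
  have core : ∀ β : Fin N → ℤ, ∑ α ∈ S ∪ S.image (fun x => x - β), (φ α - φ (α + β)) ^ 2
      = 2 * ∑ α ∈ S, φ α * (φ α - φ (α + β)) := by
    intro β
    set T := S ∪ S.image (fun x => x - β) with hT
    have hA : ∑ α ∈ T, (φ α) ^ 2 = ∑ α ∈ S, (φ α) ^ 2 :=
      (Finset.sum_subset Finset.subset_union_left (fun x _ hx => by simp [hφ0 x hx])).symm
    have hC : ∑ α ∈ T, φ α * φ (α + β) = ∑ α ∈ S, φ α * φ (α + β) :=
      (Finset.sum_subset Finset.subset_union_left (fun x _ hx => by simp [hφ0 x hx])).symm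
    have hB : ∑ α ∈ T, (φ (α + β)) ^ 2 = ∑ α ∈ S, (φ α) ^ 2 := by
      have hinj : ∀ x ∈ T, ∀ y ∈ T, x + β = y + β → x = y := fun x _ y _ hxy => by
        simpa using congrArg (fun z => z - β) hxy
      rw [← Finset.sum_image (s := T) (g := fun x => x + β) (f := fun γ => (φ γ) ^ 2) hinj]
      have hsub : S ⊆ T.image (fun x => x + β) := by
        intro γ hγ
        refine Finset.mem_image.mpr ⟨γ - β, ?_, by simp⟩
        exact Finset.mem_union_right _ (Finset.mem_image.mpr ⟨γ, hγ, rfl⟩)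
      exact (Finset.sum_subset hsub (fun x _ hx => by simp [hφ0 x hx])).symm
    calc ∑ α ∈ T, (φ α - φ (α + β)) ^ 2
        = ∑ α ∈ T, ((φ α) ^ 2 + (φ (α + β)) ^ 2 - 2 * (φ α * φ (α + β))) :=
          Finset.sum_congr rfl (fun α _ => by ring)
      _ = ∑ α ∈ T, (φ α) ^ 2 + ∑ α ∈ T, (φ (α + β)) ^ 2
          - 2 * ∑ α ∈ T, φ α * φ (α + β) := by
          rw [Finset.sum_sub_distrib, Finset.sum_add_distrib, Finset.mul_sum]
      _ = ∑ α ∈ S, (φ α) ^ 2 + ∑ α ∈ S, (φ α) ^ 2 - 2 * ∑ α ∈ S, φ α * φ (α + β) := by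
          rw [hA, hB, hC]
      _ = 2 * ∑ α ∈ S, φ α * (φ α - φ (α + β)) := by
          simp_rw [Finset.mul_sum]
          rw [← Finset.sum_add_distrib, ← Finset.sum_sub_distrib]
          exact Finset.sum_congr rfl (fun α _ => by ring)
  -- per-β formula for the inner sum
  have key : ∀ β : Fin N → ℤ, ∑ α ∈ S, φ α * ((φ α - φ (α + β)) * ω β)
      = (∑ α ∈ S ∪ S.image (fun x => x - β), (φ α - φ (α + β)) ^ 2) / 2 * ω β := by
    intro β
    rw [core β]
    have h2 : (2 * ∑ α ∈ S, φ α * (φ α - φ (α + β))) / 2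
        = ∑ α ∈ S, φ α * (φ α - φ (α + β)) := by ring
    rw [h2, Finset.sum_mul]
    exact Finset.sum_congr rfl (fun α _ => by ring)
  have hFsummable : Summable (fun β => ∑ α ∈ S, φ α * ((φ α - φ (α + β)) * ω β)) :=
    summable_sum (fun α _ => hsummand α)
  have hFnonneg : ∀ β, 0 ≤ ∑ α ∈ S, φ α * ((φ α - φ (α + β)) * ω β) := by
    intro β
    rw [key β]
    apply mul_nonneg _ (hnonneg β)
    apply div_nonneg _ (by norm_num)
    exact Finset.sum_nonneg fun α _ => sq_nonneg _
  -- find β₀ with ω β₀ > 0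
  obtain ⟨β₀, hβ₀⟩ : ∃ β, 0 < ω β := by
    by_contra hcon
    push_neg at hcon
    have hz : ω = fun _ => 0 := funext fun β => le_antisymm (hcon β) (hnonneg β)
    rw [hz, tsum_zero] at hpos
    exact lt_irrefl 0 hpos
  have hβ₀ne : β₀ ≠ 0 := fun hc => by rw [hc, hω0] at hβ₀; exact lt_irrefl 0 hβ₀
  -- nonempty support
  have hP : (S.filter (fun α => φ α ≠ 0)).Nonempty := by
    rw [Finset.filter_nonempty_iff]
    by_contra hc
    push_neg at hc
    have hz : ∑ α ∈ S, (φ α) ^ 2 = 0 :=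
      Finset.sum_eq_zero (fun α hα => by rw [hc α hα]; ring)
    rw [hz, mul_zero] at hφnorm
    norm_num at hφnorm
  -- maximize the linear functional α ↦ ⟨α, β₀⟩ over the support
  obtain ⟨α₀, hα₀P, hmax⟩ := Finset.exists_max_image (S.filter (fun α => φ α ≠ 0))
    (fun α => ∑ i, α i * β₀ i) hP
  obtain ⟨hα₀S, hα₀ne⟩ := Finset.mem_filter.mp hα₀P
  have hβsq : 0 < ∑ i, β₀ i * β₀ i := by
    obtain ⟨i, hi⟩ := Function.ne_iff.mp hβ₀ne
    apply Finset.sum_pos' (fun j _ => mul_self_nonneg _)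
    exact ⟨i, Finset.mem_univ i, mul_self_pos.mpr hi⟩
  have hnot : φ (α₀ + β₀) = 0 := by
    by_contra hne
    have hmemS : α₀ + β₀ ∈ S := by
      by_contra hc
      exact hne (hφ0 _ hc)
    have hmem : α₀ + β₀ ∈ S.filter (fun α => φ α ≠ 0) := Finset.mem_filter.mpr ⟨hmemS, hne⟩
    have hle := hmax _ hmem
    have heq : (∑ i, (α₀ + β₀) i * β₀ i) = (∑ i, α₀ i * β₀ i) + ∑ i, β₀ i * β₀ i := by
      rw [← Finset.sum_add_distrib]
      exact Finset.sum_congr rfl fun i _ => by simp [Pi.add_apply]; ring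
    omega
  -- strict positivity at β₀
  have hFpos : 0 < ∑ α ∈ S, φ α * ((φ α - φ (α + β₀)) * ω β₀) := by
    rw [key β₀]
    apply mul_pos _ hβ₀
    apply div_pos _ (by norm_num)
    apply Finset.sum_pos' (fun α _ => sq_nonneg _)
    refine ⟨α₀, Finset.mem_union_left _ hα₀S, ?_⟩
    rw [hnot, sub_zero]
    exact pow_two_pos_of_ne_zero hα₀ne
  rw [hφlam, hswap]
  exact mul_pos (pow_pos hh N) (Summable.tsum_pos hFsummable hFnonneg β₀ hFpos)
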